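/- Let γ ≥ 1 and α > −1. Let σ and ω be weights on the upper half-plane H, let Φ be a normalized Young function, and let μ be a positive Borel measure on H. Assume there is a constant C > 0 such that μ(Q_I) ≤ C |Q_I|_{ω,α}^γ for every bounded interval I ⊂ ℝ. Then for every compactly supported measurable function f and every t > 0, μ({z ∈ H : M^d_{Φ,σ,α} f(z) > t}) ≤ C |{z ∈ H : M^d_{Φ,σ,α} f(z) > t}|_{ω,α}^γ. -/

import Mathlib

open MeasureTheory Set Filter
open scoped ENNReal NNReal

noncomputable section

/-- The upper half-plane `H = {z : 0 < Im z}`. -/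
def UHP : Set ℂ := {z : ℂ | 0 < z.im}

/-- The measure `dV_α = y^α dx dy` supported on the upper half-plane. -/
def Vm (α : ℝ) : Measure ℂ :=
  MeasureTheory.volume.withDensity
    (fun z => if 0 < z.im then ENNReal.ofReal (z.im ^ α) else 0)

/-- The Carleson square `Q_I` attached to the interval `I = (a, b)`. -/
def Qbox (a b : ℝ) : Set ℂ :=
  {z : ℂ | z.re ∈ Set.Ioo a b ∧ z.im ∈ Set.Ioo 0 (b - a)}

/-- The weighted measure `|E|_{ω,α} = ∫_E ω dV_α` of a set `E`. -/
def wvol (α : ℝ) (ω : ℂ → ℝ) (E : Set ℂ) : ℝ≥0∞ :=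
  ∫⁻ z in E, ENNReal.ofReal (ω z) ∂(Vm α)

/-- A weight: a nonnegative locally integrable function on the upper half-plane. -/
def IsWeight (α : ℝ) (ω : ℂ → ℝ) : Prop :=
  Measurable ω ∧ (∀ z, 0 ≤ ω z) ∧ MeasureTheory.LocallyIntegrableOn ω UHP (Vm α)

/-- A normalized Young function: continuous, convex, increasing on `[0,∞)`,
with `Φ 0 = 0`, `Φ 1 = 1` and `Φ t → ∞` as `t → ∞`. -/
structure IsNormalizedYoung (Φ : ℝ → ℝ) : Prop where
  cont : ContinuousOn Φ (Set.Ici 0)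
  convex : ConvexOn ℝ (Set.Ici 0) Φ
  mono : MonotoneOn Φ (Set.Ici 0)
  map_zero : Φ 0 = 0
  map_one : Φ 1 = 1
  tendsto_atTop : Filter.Tendsto Φ Filter.atTop Filter.atTop

/-- The `Δ₂` (doubling) condition with constant `K`. -/
def Delta2 (Φ : ℝ → ℝ) (K : ℝ) : Prop :=
  1 < K ∧ ∀ t : ℝ, 0 ≤ t → Φ (2 * t) ≤ K * Φ t

/-- The class `B_p`: `Δ₂` together with `∫_c^∞ Φ(t)/t^p dt/t < ∞` for some `c > 0`. -/
def InBp (Φ : ℝ → ℝ) (p : ℝ) : Prop :=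
  (∃ K : ℝ, Delta2 Φ K) ∧
    ∃ c : ℝ, 0 < c ∧ (∫⁻ t in Set.Ioi c, ENNReal.ofReal (Φ t / t ^ (p + 1))) < ⊤

/-- The Luxemburg norm `‖f‖_{Q_I, Φ, ω, α}` over the Carleson square of `I = (a,b)`. -/
def luxNorm (α : ℝ) (Φ : ℝ → ℝ) (ω : ℂ → ℝ) (a b : ℝ) (f : ℂ → ℂ) : ℝ≥0∞ :=
  ⨅ (t : ℝ) (_ : 0 < t)
    (_ : (∫⁻ z in Qbox a b, ENNReal.ofReal (Φ (‖f z‖ / t) * ω z) ∂(Vm α)) /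
          wvol α ω (Qbox a b) ≤ 1),
    ENNReal.ofReal t

/-- The maximal function `M_{Φ,ω,α} f`. -/
def maxFn (α : ℝ) (Φ : ℝ → ℝ) (ω : ℂ → ℝ) (f : ℂ → ℂ) (z : ℂ) : ℝ≥0∞ :=
  ⨆ (a : ℝ) (b : ℝ) (_ : z ∈ Qbox a b), luxNorm α Φ ω a b f

/-- The dyadic grid `D^β`, as a set of pairs of endpoints. -/
def dyadicGrid (β : ℝ) : Set (ℝ × ℝ) :=
  {I : ℝ × ℝ | ∃ j m : ℤ, I.1 = (2 : ℝ) ^ j * (m + (-1 : ℝ) ^ j * β) ∧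
    I.2 = (2 : ℝ) ^ j * (m + 1 + (-1 : ℝ) ^ j * β)}

/-- The dyadic maximal function `M^{d,β}_{Φ,ω,α} f`. -/
def dyadicMax (β α : ℝ) (Φ : ℝ → ℝ) (ω : ℂ → ℝ) (f : ℂ → ℂ) (z : ℂ) : ℝ≥0∞ :=
  ⨆ (I : ℝ × ℝ) (_ : I ∈ dyadicGrid β) (_ : z ∈ Qbox I.1 I.2),
    luxNorm α Φ ω I.1 I.2 f

/-- The Hardy–Littlewood maximal function `M_α g` of the upper half-plane. -/
def hlMax (α : ℝ) (g : ℂ → ℝ) (z : ℂ) : ℝ≥0∞ :=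
  ⨆ (a : ℝ) (b : ℝ) (_ : z ∈ Qbox a b),
    (∫⁻ w in Qbox a b, ENNReal.ofReal |g w| ∂(Vm α)) / Vm α (Qbox a b)

/-- The weighted Hardy–Littlewood maximal function `M_{ω,α} f`. -/
def whlMax (α : ℝ) (ω : ℂ → ℝ) (f : ℂ → ℂ) (z : ℂ) : ℝ≥0∞ :=
  ⨆ (a : ℝ) (b : ℝ) (_ : z ∈ Qbox a b),
    (∫⁻ w in Qbox a b, ENNReal.ofReal (‖f w‖ * ω w) ∂(Vm α)) /
      wvol α ω (Qbox a b)

/-- The Békollè–Bonami constant `[ω]_{B_{p,α}}`. -/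
def BBnorm (α p : ℝ) (ω : ℂ → ℝ) : ℝ≥0∞ :=
  ⨆ (a : ℝ) (b : ℝ) (_ : a < b),
    (wvol α ω (Qbox a b) / Vm α (Qbox a b)) *
      ((∫⁻ z in Qbox a b, ENNReal.ofReal (ω z) ^ (1 - p / (p - 1)) ∂(Vm α)) /
          Vm α (Qbox a b)) ^ (p - 1)

/-- Membership in the Békollè–Bonami class `B_{p,α}`. -/
def InBB (α p : ℝ) (ω : ℂ → ℝ) : Prop := BBnorm α p ω < ⊤

/-- Membership in `𝔹_{∞,α} = ⋃_{p>1} B_{p,α}`. -/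
def InBBinfty (α : ℝ) (ω : ℂ → ℝ) : Prop := ∃ p : ℝ, 1 < p ∧ InBB α p ω

/-- The quantity `∫_H |f|^p ω dV_α`. -/
def lpInt (α p : ℝ) (ω : ℂ → ℝ) (f : ℂ → ℂ) : ℝ≥0∞ :=
  ∫⁻ z, ENNReal.ofReal (‖f z‖) ^ p * ENNReal.ofReal (ω z) ∂(Vm α)

/-- The function `K_μ(z) = sup_{I : z ∈ Q_I} μ(Q_I)/|Q_I|_{ω,α}`. -/
def Kmu (α : ℝ) (ω : ℂ → ℝ) (μ : Measure ℂ) (z : ℂ) : ℝ≥0∞ :=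
  ⨆ (a : ℝ) (b : ℝ) (_ : z ∈ Qbox a b), μ (Qbox a b) / wvol α ω (Qbox a b)

/-- `ω` is `α`-doubling with doubling function `φ` and constant `K`. -/
structure AlphaDoubling (α : ℝ) (ω : ℂ → ℝ) (φ : ℝ≥0∞ → ℝ≥0∞) (K : ℝ≥0∞) : Prop where
  mono : Monotone φ
  map_one : φ 1 = 1
  one_le : 1 ≤ K
  bound : ∀ a b : ℝ, ∀ E ⊆ Qbox a b, MeasurableSet E →
    wvol α ω (Qbox a b) / wvol α ω E ≤ K * φ (Vm α (Qbox a b) / Vm α E)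

/-- The complementary (conjugate) Young function `Ψ(s) = sup_{t ≥ 0} (t s − Φ(t))`,
valued in `ℝ≥0∞`. -/
def conjugateYoung (Φ : ℝ → ℝ) (s : ℝ) : ℝ≥0∞ :=
  ⨆ (t : ℝ) (_ : 0 ≤ t), ENNReal.ofReal (t * s - Φ t)

/-- The unweighted Luxemburg norm for an `ℝ≥0∞`-valued Young function. -/
def luxNormE (α : ℝ) (Ψ : ℝ → ℝ≥0∞) (a b : ℝ) (g : ℂ → ℝ) : ℝ≥0∞ :=
  ⨅ (t : ℝ) (_ : 0 < t)
    (_ : (∫⁻ z in Qbox a b, Ψ (|g z| / t) ∂(Vm α)) / Vm α (Qbox a b) ≤ 1),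
    ENNReal.ofReal t

/-- The Békollè–Bonami `B_{∞,α}` constant
`[ω]_{B_{∞,α}} = sup_I |Q_I|_{ω,α}⁻¹ ∫_{Q_I} M_α(ω χ_{Q_I}) dV_α`. -/
def BBinftyNorm (α : ℝ) (ω : ℂ → ℝ) : ℝ≥0∞ :=
  ⨆ (a : ℝ) (b : ℝ) (_ : a < b),
    (∫⁻ z in Qbox a b, hlMax α ((Qbox a b).indicator ω) z ∂(Vm α)) /
      wvol α ω (Qbox a b)

end

noncomputable section Aux

/-- Left endpoint of the dyadic interval indexed by `p = (j, m)`. -/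
def qbA (p : ℤ × ℤ) : ℝ := (2:ℝ) ^ p.1 * p.2

/-- Right endpoint of the dyadic interval indexed by `p = (j, m)`. -/
def qbB (p : ℤ × ℤ) : ℝ := (2:ℝ) ^ p.1 * (p.2 + 1)

/-- The dyadic Carleson box indexed by `p = (j, m)`. -/
def qb (p : ℤ × ℤ) : Set ℂ := Qbox (qbA p) (qbB p)

lemma two_zpow_pos (j : ℤ) : (0:ℝ) < (2:ℝ) ^ j := zpow_pos two_pos _

lemma qbA_lt_qbB (p : ℤ × ℤ) : qbA p < qbB p := by
  have h2 := two_zpow_pos p.1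
  have : (p.2 : ℝ) < (p.2 : ℝ) + 1 := by linarith
  simpa [qbA, qbB] using mul_lt_mul_of_pos_left this h2

lemma measurableSet_Qbox (a b : ℝ) : MeasurableSet (Qbox a b) := by
  have h : Qbox a b
      = Complex.re ⁻¹' Set.Ioo a b ∩ Complex.im ⁻¹' Set.Ioo 0 (b - a) := rfl
  rw [h]
  exact (measurableSet_Ioo.preimage Complex.measurable_re).inter
    (measurableSet_Ioo.preimage Complex.measurable_im)

lemma Qbox_subset_endpoints {a b c d : ℝ} (hab : a < b) (h : Qbox a b ⊆ Qbox c d) :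
    c ≤ a ∧ b ≤ d ∧ b - a ≤ d - c := by
  have hba : 0 < b - a := by linarith
  have hre : Set.Ioo a b ⊆ Set.Ioo c d := by
    intro x hx
    have hz : (⟨x, (b - a) / 2⟩ : ℂ) ∈ Qbox a b := by
      refine ⟨hx, ?_, ?_⟩ <;> simp <;> linarith
    exact (h hz).1
  have him : Set.Ioo (0:ℝ) (b - a) ⊆ Set.Ioo 0 (d - c) := by
    intro y hy
    have hz : (⟨(a + b) / 2, y⟩ : ℂ) ∈ Qbox a b := by
      refine ⟨⟨?_, ?_⟩, hy⟩ <;> simp <;> linarith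
    exact (h hz).2
  have h1 := (Set.Ioo_subset_Ioo_iff hab).mp hre
  have h2 := (Set.Ioo_subset_Ioo_iff hba).mp him
  exact ⟨h1.1, h1.2, h2.2⟩

lemma dyadic_nested {p q : ℤ × ℤ} (hj : p.1 ≤ q.1) (hne : (qb p ∩ qb q).Nonempty) :
    qb p ⊆ qb q := by
  obtain ⟨z, hzp, hzq⟩ := hne
  obtain ⟨⟨hz1, hz2⟩, hz3, hz4⟩ := hzp
  obtain ⟨⟨hw1, hw2⟩, hw3, hw4⟩ := hzq
  set j := p.1 with hjdef
  set m := p.2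
  set j' := q.1
  set m' := q.2
  set N : ℤ := 2 ^ (j' - j).toNat with hNdef
  have hNcast : ((j' - j).toNat : ℤ) = j' - j := Int.toNat_of_nonneg (by omega)
  have hpow : (2:ℝ) ^ j' = (2:ℝ) ^ j * (N : ℝ) := by
    have : (2:ℝ) ^ j' = (2:ℝ) ^ (j + (j' - j)) := by ring_nf
    rw [this, zpow_add₀ (two_ne_zero) j (j' - j)]
    congr 1
    rw [← hNcast, zpow_natCast]
    push_cast [hNdef]
    norm_num
  have hA : (0:ℝ) < (2:ℝ) ^ j := two_zpow_pos j
  have hN1 : (1:ℝ) ≤ (N : ℝ) := by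
    have : (1:ℤ) ≤ N := by
      calc (1:ℤ) = 2 ^ 0 := by norm_num
        _ ≤ 2 ^ (j' - j).toNat := pow_le_pow_right₀ (by norm_num) (Nat.zero_le _)
    exact_mod_cast this
  -- real inequalities from the common point
  simp only [qbA, qbB, qb, Qbox, Set.mem_setOf_eq, Set.mem_Ioo] at hz1 hz2 hw1 hw2
  rw [hpow] at hw1 hw2
  have key1 : ((N * m' : ℤ) : ℝ) < ((m + 1 : ℤ) : ℝ) := by
    push_cast
    nlinarith [hw1, hz2]
  have key2 : ((m : ℤ) : ℝ) < ((N * (m' + 1) : ℤ) : ℝ) := by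
    push_cast
    nlinarith [hz1, hw2]
  have k1 : N * m' ≤ m := by
    have h' : N * m' < m + 1 := by exact_mod_cast key1
    omega
  have k2 : m + 1 ≤ N * (m' + 1) := by
    have h' : m < N * (m' + 1) := by exact_mod_cast key2
    omega
  have k1R : ((N : ℝ) * m') ≤ (m : ℝ) := by exact_mod_cast k1
  have k2R : ((m : ℝ) + 1) ≤ (N : ℝ) * ((m' : ℝ) + 1) := by exact_mod_cast k2
  intro w hw
  obtain ⟨⟨hu1, hu2⟩, hu3, hu4⟩ := hw
  simp only [qbA, qbB, qb, Qbox, Set.mem_setOf_eq, Set.mem_Ioo] at hu1 hu2 hu4 ⊢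
  rw [hpow]
  refine ⟨⟨?_, ?_⟩, hu3, ?_⟩
  · nlinarith [hu1]
  · nlinarith [hu2]
  · nlinarith [hu4, hu1, hu2]

lemma qb_subset_eq {p q : ℤ × ℤ} (h : qb p ⊆ qb q) (hj : q.1 ≤ p.1) : p = q := by
  obtain ⟨h1, h2, h3⟩ := Qbox_subset_endpoints (qbA_lt_qbB p) h
  have hAp : qbB p - qbA p = (2:ℝ) ^ p.1 := by simp [qbA, qbB]; ring
  have hAq : qbB q - qbA q = (2:ℝ) ^ q.1 := by simp [qbA, qbB]; ring
  rw [hAp, hAq] at h3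
  have hj2 : p.1 ≤ q.1 := (zpow_le_zpow_iff_right₀ (by norm_num : (1:ℝ) < 2)).mp h3
  have hjeq : p.1 = q.1 := le_antisymm hj2 hj
  have hA := two_zpow_pos p.1
  simp only [qbA, qbB, ← hjeq] at h1 h2
  have hm1 : (q.2 : ℝ) ≤ (p.2 : ℝ) := by
    have := (mul_le_mul_iff_right₀ hA).mp h1; exact this
  have hm2 : (p.2 : ℝ) + 1 ≤ (q.2 : ℝ) + 1 := by
    have := (mul_le_mul_iff_right₀ hA).mp h2; linarith
  have : p.2 = q.2 := by
    have a1 : q.2 ≤ p.2 := by exact_mod_cast hm1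
    have a2 : p.2 ≤ q.2 := by exact_mod_cast (by linarith : (p.2:ℝ) ≤ q.2)
    omega
  exact Prod.ext hjeq this

lemma finset_sum_rpow_le {ι : Type*} (s : Finset ι) (f : ι → ℝ≥0∞) {γ : ℝ} (hγ : 1 ≤ γ) :
    ∑ i ∈ s, f i ^ γ ≤ (∑ i ∈ s, f i) ^ γ := by
  induction s using Finset.cons_induction with
  | empty => simp [ENNReal.zero_rpow_of_pos (lt_of_lt_of_le one_pos hγ)]
  | cons a s ha ih =>
    rw [Finset.sum_cons, Finset.sum_cons]
    calc f a ^ γ + ∑ i ∈ s, f i ^ γ ≤ f a ^ γ + (∑ i ∈ s, f i) ^ γ := add_le_add_right ih _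
      _ ≤ (f a + ∑ i ∈ s, f i) ^ γ := ENNReal.add_rpow_le_rpow_add _ _ hγ

lemma tsum_rpow_le {ι : Type*} (f : ι → ℝ≥0∞) {γ : ℝ} (hγ : 1 ≤ γ) :
    ∑' i, f i ^ γ ≤ (∑' i, f i) ^ γ := by
  rw [ENNReal.tsum_eq_iSup_sum]
  refine iSup_le fun s => ?_
  calc ∑ i ∈ s, f i ^ γ ≤ (∑ i ∈ s, f i) ^ γ := finset_sum_rpow_le s f hγ
    _ ≤ (∑' i, f i) ^ γ :=
      ENNReal.rpow_le_rpow (ENNReal.sum_le_tsum s) (le_trans zero_le_one hγ)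

end Aux

/-- Lemma 2.3: if `μ(Q_I) ≤ C |Q_I|_{ω,α}^γ` for every interval,
then `μ({M^d_{Φ,σ,α} f > t}) ≤ C |{M^d_{Φ,σ,α} f > t}|_{ω,α}^γ`. -/
theorem statement9 (γ α : ℝ) (hγ : 1 ≤ γ) (hα : -1 < α)
    (σ ω : ℂ → ℝ) (hσ : IsWeight α σ) (hω : IsWeight α ω)
    (Φ : ℝ → ℝ) (hΦ : IsNormalizedYoung Φ)
    (μ : Measure ℂ) (hμ : μ UHPᶜ = 0)
    (C : ℝ) (hC : 0 < C)
    (hcond : ∀ a b : ℝ, a < b →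
      μ (Qbox a b) ≤ ENNReal.ofReal C * (wvol α ω (Qbox a b)) ^ γ)
    (f : ℂ → ℂ) (hf : Measurable f) (hfc : HasCompactSupport f)
    (t : ℝ) (ht : 0 < t) :
    μ {z : ℂ | ENNReal.ofReal t < dyadicMax 0 α Φ σ f z}
      ≤ ENNReal.ofReal C *
          (wvol α ω {z : ℂ | ENNReal.ofReal t < dyadicMax 0 α Φ σ f z}) ^ γ := by
    classical
  have hγ0 : (0:ℝ) ≤ γ := le_trans zero_le_one hγ
  set E := {z : ℂ | ENNReal.ofReal t < dyadicMax 0 α Φ σ f z} with hEdef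
  set ν : Measure ℂ := (Vm α).withDensity (fun z => ENNReal.ofReal (ω z)) with hνdef
  have hwv : ∀ s : Set ℂ, MeasurableSet s → wvol α ω s = ν s := by
    intro s hs
    rw [hνdef, withDensity_apply _ hs]; rfl
  -- the set of dyadic indices with large Luxemburg norm
  set S : Set (ℤ × ℤ) :=
    {p | ENNReal.ofReal t < luxNorm α Φ σ (qbA p) (qbB p) f} with hSdef
  have hgrid : ∀ p : ℤ × ℤ, (qbA p, qbB p) ∈ dyadicGrid 0 := by
    intro p
    exact ⟨p.1, p.2, by simp [qbA], by simp [qbB]⟩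
  have hEeq : E = ⋃ p ∈ S, qb p := by
    ext z
    simp only [hEdef, Set.mem_setOf_eq, Set.mem_iUnion, exists_prop]
    constructor
    · intro hz
      simp only [dyadicMax, lt_iSup_iff] at hz
      obtain ⟨I, hIg, hzI, hlt⟩ := hz
      obtain ⟨j, m, h1, h2⟩ := hIg
      simp only [mul_zero, add_zero] at h1 h2
      refine ⟨(j, m), ?_, ?_⟩
      · show ENNReal.ofReal t < luxNorm α Φ σ (qbA (j,m)) (qbB (j,m)) f
        simpa [qbA, qbB, ← h1, ← h2] using hlt
      · show z ∈ Qbox (qbA (j,m)) (qbB (j,m))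
        simpa [qbA, qbB, ← h1, ← h2] using hzI
    · rintro ⟨p, hpS, hzp⟩
      simp only [dyadicMax, lt_iSup_iff]
      exact ⟨(qbA p, qbB p), hgrid p, hzp, hpS⟩
  have hEmeas : MeasurableSet E := by
    rw [hEeq]
    exact MeasurableSet.biUnion (Set.to_countable S)
      (fun p _ => measurableSet_Qbox _ _)
  -- truncated unions
  set T : ℕ → Set (ℤ × ℤ) := fun n => {p ∈ S | p.1 ≤ (n : ℤ)} with hTdef
  set U : ℕ → Set ℂ := fun n => ⋃ p ∈ T n, qb p with hUdef
  have hUE : (⋃ n, U n) = E := by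
    rw [hEeq]
    ext z
    simp only [hUdef, hTdef, Set.mem_iUnion, Set.mem_setOf_eq, exists_prop,
      Set.mem_sep_iff]
    constructor
    · rintro ⟨n, p, ⟨hp, _⟩, hz⟩; exact ⟨p, hp, hz⟩
    · rintro ⟨p, hp, hz⟩
      exact ⟨p.1.toNat, p, ⟨hp, Int.self_le_toNat _⟩, hz⟩
  have hUdir : Directed (· ⊆ ·) U := by
    refine (Monotone.directed_le ?_)
    intro a b hab
    refine Set.iUnion₂_mono' fun p hp => ⟨p, ?_, subset_rfl⟩
    exact ⟨hp.1, le_trans hp.2 (by exact_mod_cast hab)⟩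
  have hmain : ∀ n : ℕ, μ (U n) ≤ ENNReal.ofReal C * (wvol α ω E) ^ γ := by
    intro n
    -- maximal indices
    set Mx : Set (ℤ × ℤ) :=
      {p ∈ T n | ∀ q ∈ T n, qb p ⊆ qb q → p = q} with hMxdef
    have hcover : ∀ p ∈ T n, ∃ q ∈ Mx, qb p ⊆ qb q := by
      intro p hp
      obtain ⟨j₀, ⟨m₀, hq, hsub⟩, hmax⟩ :=
        Int.exists_greatest_of_bdd
          (P := fun j' => ∃ m', (j', m') ∈ T n ∧ qb p ⊆ qb (j', m'))
          ⟨(n : ℤ), fun z hz => hz.choose_spec.1.2⟩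
          ⟨p.1, p.2, hp, subset_rfl⟩
      refine ⟨(j₀, m₀), ⟨hq, ?_⟩, hsub⟩
      intro r hr hsub'
      have hrj : r.1 ≤ j₀ := hmax r.1 ⟨r.2, hr, hsub.trans hsub'⟩
      exact qb_subset_eq hsub' hrj
    have hdisj : Mx.PairwiseDisjoint qb := by
      intro p hp q hq hne
      rw [Function.onFun, Set.disjoint_left]
      intro z hzp hzq
      rcases le_total p.1 q.1 with h | h
      · exact hne (hp.2 q hq.1 (dyadic_nested h ⟨z, hzp, hzq⟩))
      · exact hne ((hq.2 p hp.1 (dyadic_nested h ⟨z, hzq, hzp⟩)).symm)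
    have hUM : U n = ⋃ p ∈ Mx, qb p := by
      apply Set.Subset.antisymm
      · intro z hz
        simp only [hUdef, Set.mem_iUnion, exists_prop] at hz ⊢
        obtain ⟨p, hp, hz⟩ := hz
        obtain ⟨q, hq, hsub⟩ := hcover p hp
        exact ⟨q, hq, hsub hz⟩
      · exact Set.iUnion₂_mono' fun p hp => ⟨p, hp.1, subset_rfl⟩
    have hsubE : (⋃ p ∈ Mx, qb p) ⊆ E := by
      rw [hEeq]
      exact Set.iUnion₂_mono' fun p hp => ⟨p, hp.1.1, subset_rfl⟩
    calc μ (U n) = μ (⋃ p ∈ Mx, qb p) := by rw [hUM]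
      _ ≤ ∑' p : Mx, μ (qb p) := measure_biUnion_le μ (Set.to_countable Mx) _
      _ ≤ ∑' p : Mx, ENNReal.ofReal C * (wvol α ω (qb (p : ℤ × ℤ))) ^ γ :=
          ENNReal.tsum_le_tsum (fun p => hcond _ _ (qbA_lt_qbB (p : ℤ × ℤ)))
      _ = ENNReal.ofReal C * ∑' p : Mx, (wvol α ω (qb (p : ℤ × ℤ))) ^ γ :=
          ENNReal.tsum_mul_left
      _ ≤ ENNReal.ofReal C * (∑' p : Mx, wvol α ω (qb (p : ℤ × ℤ))) ^ γ :=
          mul_le_mul_right (tsum_rpow_le _ hγ) _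
      _ = ENNReal.ofReal C * (∑' p : Mx, ν (qb (p : ℤ × ℤ))) ^ γ := by
          congr 2
          exact tsum_congr fun p => hwv _ (measurableSet_Qbox _ _)
      _ = ENNReal.ofReal C * (ν (⋃ p ∈ Mx, qb p)) ^ γ := by
          rw [measure_biUnion (Set.to_countable Mx) hdisj
            (fun p _ => measurableSet_Qbox _ _)]
      _ ≤ ENNReal.ofReal C * (ν E) ^ γ :=
          mul_le_mul_right (ENNReal.rpow_le_rpow (measure_mono hsubE) hγ0) _
      _ = ENNReal.ofReal C * (wvol α ω E) ^ γ := by rw [hwv E hEmeas]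
  calc μ E = μ (⋃ n, U n) := by rw [hUE]
    _ = ⨆ n, μ (U n) := hUdir.measure_iUnion
    _ ≤ ENNReal.ofReal C * (wvol α ω E) ^ γ := iSup_le hmain
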